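/- Let X and A be nonempty finite sets, η > 0, π₀ : X → Δ(A) an initial policy, and Q₁, …, Q_k : X × A → ℝ arbitrary functions. Define recursively for i = 1, …, k: V_i(x) = (1/η) · log( Σ_a π_{i−1}(a|x) exp(η Q_i(x,a)) ) and π_i(a|x) = π_{i−1}(a|x) · exp( η (Q_i(x,a) − V_i(x)) ). Then for every state x: Σ_{i=1}^k V_i(x) = max_{p ∈ Δ(A)} { Σ_a p(a) · Σ_{i=1}^k Q_i(x,a) − (1/η) · KL(p ‖ π₀(·|x)) }. -/

import Mathlib

open scoped ENNReal

open Classical in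
/-- Relative entropy between two (finitely supported) distributions given as functions,
valued in `[0,∞]`, with `KL(p‖p') = ∞` when `p` is not absolutely continuous w.r.t. `p'`. -/
noncomputable def KLd {S : Type*} [Fintype S] (p q : S → ℝ) : ℝ≥0∞ :=
  if ∀ s, q s = 0 → p s = 0 then
    ENNReal.ofReal (∑ s, if p s = 0 then (0 : ℝ) else p s * Real.log (p s / q s))
  else ⊤


lemma gibbs_aux {A : Type*} [Fintype A] (p q : A → ℝ)
    (hp0 : ∀ a, 0 ≤ p a) (hq0 : ∀ a, 0 ≤ q a) (hp1 : ∑ a, p a = 1) (hq1 : ∑ a, q a = 1)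
    (hac : ∀ a, q a = 0 → p a = 0) :
    0 ≤ ∑ a, (if p a = 0 then (0:ℝ) else p a * Real.log (p a / q a)) := by
  have key : ∀ a, p a - (if p a = 0 then (0:ℝ) else q a)
      ≤ (if p a = 0 then (0:ℝ) else p a * Real.log (p a / q a)) := by
    intro a
    by_cases h : p a = 0
    · simp [h]
    · simp only [h, if_neg, if_false]
      have hpa : 0 < p a := lt_of_le_of_ne (hp0 a) (Ne.symm h)
      have hqa : 0 < q a := by
        rcases lt_or_eq_of_le (hq0 a) with h' | h'
        · exact h'
        · exact absurd (hac a h'.symm) h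
      have hlog : Real.log (q a / p a) ≤ q a / p a - 1 :=
        Real.log_le_sub_one_of_pos (by positivity)
      have hneg : Real.log (q a / p a) = - Real.log (p a / q a) := by
        rw [← Real.log_inv]; congr 1; field_simp
      rw [hneg] at hlog
      have h2 := mul_le_mul_of_nonneg_left hlog (le_of_lt hpa)
      have hdiv : p a * (q a / p a - 1) = q a - p a := by field_simp
      nlinarith
  have hle : ∑ a, (if p a = 0 then (0:ℝ) else q a) ≤ 1 := by
    rw [← hq1]
    exact Finset.sum_le_sum fun a _ => by by_cases h : p a = 0 <;> simp [h, hq0 a]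
  have := Finset.sum_le_sum fun a (_ : a ∈ Finset.univ) => key a
  rw [Finset.sum_sub_distrib, hp1] at this
  linarith

lemma decomp_aux {A : Type*} [Fintype A] (p q0 S : A → ℝ) (W η : ℝ)
    (hq0 : ∀ a, 0 ≤ q0 a) (hp0 : ∀ a, 0 ≤ p a) (hp1 : ∑ a, p a = 1)
    (hac : ∀ a, q0 a = 0 → p a = 0) :
    ∑ a, (if p a = 0 then (0:ℝ) else p a * Real.log (p a / q0 a))
    = (∑ a, (if p a = 0 then (0:ℝ)
        else p a * Real.log (p a / (q0 a * Real.exp (η * (S a - W))))))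
      + η * ((∑ a, p a * S a) - W) := by
  have hrhs : η * ((∑ a, p a * S a) - W) = ∑ a, p a * (η * (S a - W)) := by
    have h2 : ∑ a, p a * (η * (S a - W)) = (∑ a, η * (p a * S a)) - ∑ a, (η * W) * p a := by
      rw [← Finset.sum_sub_distrib]
      exact Finset.sum_congr rfl fun a _ => by ring
    rw [h2, ← Finset.mul_sum, ← Finset.mul_sum, hp1]
    ring
  rw [hrhs, ← Finset.sum_add_distrib]
  apply Finset.sum_congr rfl
  intro a _
  by_cases h : p a = 0
  · simp [h]
  · simp only [h, if_false]
    have hpa : 0 < p a := lt_of_le_of_ne (hp0 a) (Ne.symm h)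
    have hqa : 0 < q0 a := by
      rcases lt_or_eq_of_le (hq0 a) with h' | h'
      · exact h'
      · exact absurd (hac a h'.symm) h
    have hlog : Real.log (p a / q0 a)
        = Real.log (p a / (q0 a * Real.exp (η * (S a - W)))) + (η * (S a - W)) := by
      rw [Real.log_div (ne_of_gt hpa) (by positivity),
          Real.log_div (ne_of_gt hpa) (by positivity),
          Real.log_mul (ne_of_gt hqa) (Real.exp_ne_zero _), Real.log_exp]
      ring
    rw [hlog]; ring

/-- Telescoping property of mirror-descent value iterates:  with
`V_i(x) = (1/η) log Σ_a π_{i−1}(a|x) exp(η Q_i(x,a))` and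
`π_i(a|x) = π_{i−1}(a|x) exp(η (Q_i(x,a) − V_i(x)))` for `i = 1, …, k`,
for every state `x` the sum `Σ_{i=1}^k V_i(x)` equals
`max_{p ∈ Δ(A)} {⟨p, Σ_{i=1}^k Q_i(x,·)⟩ − (1/η) KL(p ‖ π₀(·|x))}`. -/
theorem stmt_8 {X A : Type*} [Fintype X] [Fintype A] [Nonempty X] [Nonempty A]
    (η : ℝ) (hη : 0 < η) (k : ℕ)
    (π : ℕ → X → A → ℝ) (hπ00 : ∀ x a, 0 ≤ π 0 x a) (hπ01 : ∀ x, ∑ a, π 0 x a = 1)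
    (Q : ℕ → X → A → ℝ) (V : ℕ → X → ℝ)
    (hV : ∀ i, 1 ≤ i → i ≤ k → ∀ x,
        V i x = (1 / η) * Real.log (∑ a, π (i - 1) x a * Real.exp (η * Q i x a)))
    (hπ : ∀ i, 1 ≤ i → i ≤ k → ∀ x a,
        π i x a = π (i - 1) x a * Real.exp (η * (Q i x a - V i x))) :
    ∀ x, IsGreatest
      {v : EReal | ∃ p : A → ℝ, (∀ a, 0 ≤ p a) ∧ (∑ a, p a = 1) ∧
        v = ((∑ a, p a * ∑ i ∈ Finset.Icc 1 k, Q i x a : ℝ) : EReal)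
              - ((1 / η : ℝ) : EReal) * (KLd p (π 0 x) : EReal)}
      (((∑ i ∈ Finset.Icc 1 k, V i x : ℝ)) : EReal) := by
  intro x
  set S : A → ℝ := fun a => ∑ i ∈ Finset.Icc 1 k, Q i x a with hS
  set W : ℝ := ∑ i ∈ Finset.Icc 1 k, V i x with hW
  set q0 : A → ℝ := π 0 x with hq0def
  have hq00 : ∀ a, 0 ≤ q0 a := hπ00 x
  have hq01 : ∑ a, q0 a = 1 := hπ01 x
  -- the telescoped representation of π j
  have claim : ∀ j, j ≤ k →
      (∀ a, π j x a = q0 a * Real.exp (η * ((∑ i ∈ Finset.Icc 1 j, Q i x a)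
          - ∑ i ∈ Finset.Icc 1 j, V i x))) ∧ (∑ a, π j x a = 1) := by
    intro j
    induction j with
    | zero =>
      intro _
      refine ⟨fun a => by simp; rfl, hπ01 x⟩
    | succ n ih =>
      intro hjk
      obtain ⟨hrep, hsum⟩ := ih (le_trans (Nat.le_succ n) hjk)
      have h1 : 1 ≤ n + 1 := Nat.succ_le_succ (Nat.zero_le n)
      have hnn : ∀ a, 0 ≤ π n x a := by
        intro a; rw [hrep a]; exact mul_nonneg (hq00 a) (Real.exp_nonneg _)
      have hpos : 0 < ∑ a, π n x a * Real.exp (η * Q (n+1) x a) := by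
        apply Finset.sum_pos'
        · intro a _; exact mul_nonneg (hnn a) (Real.exp_nonneg _)
        · obtain ⟨a, _, ha⟩ := Finset.exists_ne_zero_of_sum_ne_zero
            (hsum ▸ one_ne_zero : (∑ a, π n x a) ≠ 0)
          exact ⟨a, Finset.mem_univ a,
            mul_pos (lt_of_le_of_ne (hnn a) (Ne.symm ha)) (Real.exp_pos _)⟩
      have hVe : Real.exp (η * V (n+1) x) = ∑ a, π n x a * Real.exp (η * Q (n+1) x a) := by
        have hVv := hV (n+1) h1 hjk x
        simp only [Nat.add_sub_cancel] at hVv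
        rw [hVv]
        have : η * (1 / η * Real.log (∑ a, π n x a * Real.exp (η * Q (n+1) x a)))
            = Real.log (∑ a, π n x a * Real.exp (η * Q (n+1) x a)) := by
          field_simp
        rw [this, Real.exp_log hpos]
      have hπv : ∀ a, π (n+1) x a = π n x a * Real.exp (η * (Q (n+1) x a - V (n+1) x)) := by
        intro a
        have := hπ (n+1) h1 hjk x a
        simpa only [Nat.add_sub_cancel] using this
      constructor
      · intro a
        rw [hπv a, hrep a,
          Finset.sum_Icc_succ_top h1 (fun i => Q i x a),
          Finset.sum_Icc_succ_top h1 (fun i => V i x),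
          mul_assoc, ← Real.exp_add]
        congr 2
        ring
      · have step : ∀ a, π n x a * Real.exp (η * (Q (n+1) x a - V (n+1) x))
            = (π n x a * Real.exp (η * Q (n+1) x a)) * Real.exp (-(η * V (n+1) x)) := by
          intro a
          rw [mul_assoc, ← Real.exp_add]
          congr 2
          ring
        calc ∑ a, π (n+1) x a
            = ∑ a, (π n x a * Real.exp (η * Q (n+1) x a)) * Real.exp (-(η * V (n+1) x)) := by
              exact Finset.sum_congr rfl fun a _ => by rw [hπv a, step a]
          _ = (∑ a, π n x a * Real.exp (η * Q (n+1) x a)) * Real.exp (-(η * V (n+1) x)) := by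
              rw [Finset.sum_mul]
          _ = 1 := by rw [← hVe, ← Real.exp_add]; simp
  obtain ⟨hqk_rep, hqk_sum⟩ := claim k le_rfl
  set qk : A → ℝ := fun a => q0 a * Real.exp (η * (S a - W)) with hqkdef
  have hqk_rep' : ∀ a, π k x a = qk a := fun a => hqk_rep a
  have hqk0 : ∀ a, 0 ≤ qk a := fun a =>
    mul_nonneg (hq00 a) (Real.exp_nonneg _)
  have hqk1 : ∑ a, qk a = 1 := by
    rw [← hqk_sum]; exact Finset.sum_congr rfl fun a _ => (hqk_rep' a).symm
  have hzero : ∀ a, q0 a = 0 ↔ qk a = 0 := by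
    intro a
    simp only [hqkdef]
    constructor
    · intro h; rw [h]; ring
    · intro h
      rcases mul_eq_zero.1 h with h' | h'
      · exact h'
      · exact absurd h' (Real.exp_ne_zero _)
  -- the KL of a p absolutely continuous w.r.t. q0
  have klval : ∀ p : A → ℝ, (∀ a, 0 ≤ p a) → (∑ a, p a = 1) →
      (∀ a, q0 a = 0 → p a = 0) →
      (KLd p q0 : EReal)
        = ((∑ a, (if p a = 0 then (0:ℝ) else p a * Real.log (p a / q0 a)) : ℝ) : EReal) := by
    intro p hp0 hp1 hac
    have hnn := gibbs_aux p q0 hp0 hq00 hp1 hq01 hac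
    rw [KLd, if_pos hac, EReal.coe_ennreal_ofReal, max_eq_left hnn]
  constructor
  · -- membership: take p = qk
    refine ⟨qk, hqk0, hqk1, ?_⟩
    have hac : ∀ a, q0 a = 0 → qk a = 0 := fun a h => (hzero a).1 h
    rw [klval qk hqk0 hqk1 hac]
    have hdec := decomp_aux qk q0 S W η hq00 hqk0 hqk1 hac
    have hself : ∑ a, (if qk a = 0 then (0:ℝ)
        else qk a * Real.log (qk a / (q0 a * Real.exp (η * (S a - W))))) = 0 := by
      apply Finset.sum_eq_zero
      intro a _
      by_cases h : qk a = 0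
      · simp [h]
      · simp only [h, if_false]
        have : qk a / (q0 a * Real.exp (η * (S a - W))) = 1 := by
          rw [hqkdef]
          exact div_self h
        rw [this, Real.log_one, mul_zero]
    rw [hdec, hself, zero_add, ← EReal.coe_mul, ← EReal.coe_sub]
    norm_cast
    field_simp
    simp only [hS]
    ring
  · -- upper bound
    rintro v ⟨p, hp0, hp1, rfl⟩
    by_cases hac : ∀ a, q0 a = 0 → p a = 0
    · rw [klval p hp0 hp1 hac, ← EReal.coe_mul, ← EReal.coe_sub, EReal.coe_le_coe_iff]
      have hdec := decomp_aux p q0 S W η hq00 hp0 hp1 hac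
      have hack : ∀ a, qk a = 0 → p a = 0 := fun a h => hac a ((hzero a).2 h)
      have hgib : 0 ≤ ∑ a, (if p a = 0 then (0:ℝ) else p a * Real.log (p a / qk a)) :=
        gibbs_aux p qk hp0 hqk0 hp1 hqk1 hack
      have heq : (∑ a, (if p a = 0 then (0:ℝ)
          else p a * Real.log (p a / (q0 a * Real.exp (η * (S a - W))))))
          = ∑ a, (if p a = 0 then (0:ℝ) else p a * Real.log (p a / qk a)) := rfl
      rw [heq] at hdec
      rw [hdec]
      have h1η : 0 < 1 / η := by positivity
      have : (1 / η) * (∑ a, (if p a = 0 then (0:ℝ) else p a * Real.log (p a / qk a))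
          + η * ((∑ a, p a * S a) - W))
          = (1 / η) * (∑ a, (if p a = 0 then (0:ℝ) else p a * Real.log (p a / qk a)))
            + ((∑ a, p a * S a) - W) := by
        field_simp
      rw [this]
      have := mul_nonneg (le_of_lt h1η) hgib
      linarith
    · rw [KLd, if_neg hac, EReal.coe_ennreal_top, EReal.mul_top_of_pos (by
        exact_mod_cast (by positivity : (0:ℝ) < 1/η)), sub_eq_add_neg, EReal.neg_top,
        EReal.add_bot]
      exact bot_le
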